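/- arXiv:2012.09625 — 4 statements merged into one kernel-verified Lean document; each statement's English description precedes it below -/
import Mathlib

section
/- In the real Clifford algebra Cl(1,n+1), let x = ∑_{j=1}^n x_j e_j be a nonzero vector in the span of e₁,…,e_n, let |x| = (∑_j x_j²)^{1/2}, and set x' = e₁ x e₁. Then the following identity holds in Cl(1,n+1): e_{n+1}·e₁·(1 + (1/2)·x·(e₀+e_{n+1})) = (1 + (1/(2|x|²))·x'·(e₀+e_{n+1})) · ((−1/|x|)·e₁·x) · ((1/2)(|x|+|x|⁻¹) + (1/2)(|x|−|x|⁻¹)·e₀e_{n+1}) · (1 + (1/(2|x|²))·x·(e₀−e_{n+1})). (This is the Gelfand–Naimark decomposition w⁻¹ n̄_x = n̄_{x'/|x|²} · (−e₁x/|x|) · a_{ln|x|} · n_{x/|x|²} of the conformal spin group Spin₀(1,n+1).) -/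
set_option maxHeartbeats 2000000 in
private lemma gn_key {A : Type*} [Ring A] [Algebra ℝ A] (a b u X : A) (r : ℝ) (hr : r ≠ 0)
    (haa : a*a = 1) (hbb : b*b = -1) (huu : u*u = -1)
    (hXX : X*X = algebraMap ℝ A (-(r^2)))
    (hba : b*a = -(a*b)) (hua : u*a = -(a*u)) (hub : u*b = -(b*u))
    (hXa : X*a = -(a*X)) (hXb : X*b = -(b*X)) :
    b*u*(1 + (1/2:ℝ) • (X*(a+b))) =
      (1 + (1/(2*r^2)) • ((u*X*u)*(a+b))) * ((-(1/r)) • (u*X)) *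
        (((1/2)*(r+r⁻¹)) • (1:A) + ((1/2)*(r-r⁻¹)) • (a*b)) *
        (1 + (1/(2*r^2)) • (X*(a-b))) := by
  have haa' : ∀ t : A, a*(a*t) = t := fun t => by rw [← mul_assoc, haa, one_mul]
  have hbb' : ∀ t : A, b*(b*t) = -t := fun t => by rw [← mul_assoc, hbb, neg_one_mul]
  have huu' : ∀ t : A, u*(u*t) = -t := fun t => by rw [← mul_assoc, huu, neg_one_mul]
  have hXX' : ∀ t : A, X*(X*t) = (-(r^2)) • t := fun t => by
    rw [← mul_assoc, hXX, Algebra.algebraMap_eq_smul_one, smul_mul_assoc, one_mul]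
  have hba' : ∀ t : A, b*(a*t) = -(a*(b*t)) := fun t => by
    rw [← mul_assoc, hba, neg_mul, mul_assoc]
  have hua' : ∀ t : A, u*(a*t) = -(a*(u*t)) := fun t => by
    rw [← mul_assoc, hua, neg_mul, mul_assoc]
  have hub' : ∀ t : A, u*(b*t) = -(b*(u*t)) := fun t => by
    rw [← mul_assoc, hub, neg_mul, mul_assoc]
  have hXa' : ∀ t : A, X*(a*t) = -(a*(X*t)) := fun t => by
    rw [← mul_assoc, hXa, neg_mul, mul_assoc]
  have hXb' : ∀ t : A, X*(b*t) = -(b*(X*t)) := fun t => by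
    rw [← mul_assoc, hXb, neg_mul, mul_assoc]
  simp only [mul_add, add_mul, mul_sub, sub_mul, smul_mul_assoc, mul_smul_comm, smul_smul,
    mul_assoc, mul_one, one_mul, smul_add, smul_sub, mul_neg, neg_mul, smul_neg, neg_neg,
    hXX, hXX', haa, haa', hbb, hbb', huu, huu', hba, hba', hua, hua', hub, hub', hXa, hXa',
    hXb, hXb', Algebra.algebraMap_eq_smul_one]
  match_scalars <;> field_simp <;> ring

/-- Gelfand–Naimark decomposition `w⁻¹ n̄_x = n̄_{x'/|x|²} · (−e₁x/|x|) · a_{ln|x|} · n_{x/|x|²}`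
in the Clifford algebra Cl(1,n+1). -/
theorem gelfand_naimark_decomposition (n : ℕ)
    (Q : QuadraticForm ℝ (EuclideanSpace ℝ (Fin (n + 2))))
    (hQ : ∀ v : EuclideanSpace ℝ (Fin (n + 2)),
      Q v = (v 0) ^ 2 - ∑ j : Fin (n + 1), (v j.succ) ^ 2)
    (c : Fin n → ℝ)
    (x : EuclideanSpace ℝ (Fin (n + 2)))
    (hx : x = ∑ j : Fin n, c j • EuclideanSpace.single (j.succ.castSucc) (1 : ℝ))
    (hx0 : x ≠ 0)
    (nx : ℝ) (hnx : nx = Real.sqrt (∑ j : Fin n, (c j) ^ 2)) :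
    CliffordAlgebra.ι Q (EuclideanSpace.single (Fin.last (n + 1)) (1 : ℝ)) *
        CliffordAlgebra.ι Q (EuclideanSpace.single (1 : Fin (n + 2)) (1 : ℝ)) *
        (1 + (1 / 2 : ℝ) •
          (CliffordAlgebra.ι Q x *
            (CliffordAlgebra.ι Q (EuclideanSpace.single (0 : Fin (n + 2)) (1 : ℝ)) +
             CliffordAlgebra.ι Q (EuclideanSpace.single (Fin.last (n + 1)) (1 : ℝ))))) =
      (1 + (1 / (2 * nx ^ 2)) •
          ((CliffordAlgebra.ι Q (EuclideanSpace.single (1 : Fin (n + 2)) (1 : ℝ)) *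
              CliffordAlgebra.ι Q x *
              CliffordAlgebra.ι Q (EuclideanSpace.single (1 : Fin (n + 2)) (1 : ℝ))) *
            (CliffordAlgebra.ι Q (EuclideanSpace.single (0 : Fin (n + 2)) (1 : ℝ)) +
             CliffordAlgebra.ι Q (EuclideanSpace.single (Fin.last (n + 1)) (1 : ℝ))))) *
        ((-(1 / nx)) •
          (CliffordAlgebra.ι Q (EuclideanSpace.single (1 : Fin (n + 2)) (1 : ℝ)) *
            CliffordAlgebra.ι Q x)) *
        (((1 / 2) * (nx + nx⁻¹)) • (1 : CliffordAlgebra Q) +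
          ((1 / 2) * (nx - nx⁻¹)) •
            (CliffordAlgebra.ι Q (EuclideanSpace.single (0 : Fin (n + 2)) (1 : ℝ)) *
             CliffordAlgebra.ι Q (EuclideanSpace.single (Fin.last (n + 1)) (1 : ℝ)))) *
        (1 + (1 / (2 * nx ^ 2)) •
          (CliffordAlgebra.ι Q x *
            (CliffordAlgebra.ι Q (EuclideanSpace.single (0 : Fin (n + 2)) (1 : ℝ)) -
             CliffordAlgebra.ι Q (EuclideanSpace.single (Fin.last (n + 1)) (1 : ℝ))))) := by
  -- n ≠ 0
  rcases Nat.eq_zero_or_pos n with hn0 | hnpos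
  · exfalso; subst hn0; apply hx0; rw [hx]; simp
  -- abbreviations
  set e0 : EuclideanSpace ℝ (Fin (n + 2)) := EuclideanSpace.single (0 : Fin (n + 2)) (1 : ℝ) with he0
  set e1 : EuclideanSpace ℝ (Fin (n + 2)) := EuclideanSpace.single (1 : Fin (n + 2)) (1 : ℝ) with he1
  set eL : EuclideanSpace ℝ (Fin (n + 2)) := EuclideanSpace.single (Fin.last (n + 1)) (1 : ℝ) with heL
  -- pointwise values
  have hv : ∀ (i : Fin (n+2)) (k : Fin (n+2)),
      (EuclideanSpace.single i (1:ℝ)) k = if k = i then 1 else 0 :=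
    fun i k => EuclideanSpace.single_apply i 1 k
  have hxv : ∀ k : Fin (n+2), x k = ∑ j : Fin n, (if k = j.succ.castSucc then c j else 0) := by
    intro k
    rw [hx, WithLp.ofLp_sum, Finset.sum_apply]
    simp [EuclideanSpace.single_apply, mul_ite, mul_one, mul_zero]
  have hx0' : x 0 = 0 := by
    rw [hxv]
    apply Finset.sum_eq_zero
    intro j _
    rw [if_neg]
    simp only [Fin.ext_iff, Fin.val_zero, Fin.coe_castSucc, Fin.val_succ]
    omega
  have hxcs : ∀ k : Fin n, x ((Fin.castSucc k).succ) = c k := by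
    intro k
    rw [hxv, Finset.sum_eq_single k]
    · rw [if_pos]; rw [Fin.succ_castSucc]
    · intro j _ hj
      rw [if_neg]
      intro h
      apply hj
      rw [← Fin.succ_castSucc] at h
      exact (Fin.succ_injective _ (Fin.castSucc_injective _ h)).symm
    · intro h; exact absurd (Finset.mem_univ k) h
  have hxlast : x (Fin.last (n+1)) = 0 := by
    have h : x ((Fin.last n).succ) = 0 := by
      rw [hxv]
      apply Finset.sum_eq_zero
      intro j _
      rw [if_neg]
      have := j.isLt
      simp only [Fin.ext_iff, Fin.val_succ, Fin.coe_castSucc, Fin.val_last]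
      omega
    rwa [Fin.succ_last] at h
  -- nx facts
  have hsum_pos : 0 < ∑ j : Fin n, (c j)^2 := by
    have hc : ∃ k, c k ≠ 0 := by
      by_contra h
      push_neg at h
      apply hx0
      rw [hx]
      simp [h]
    obtain ⟨k, hk⟩ := hc
    exact Finset.sum_pos' (fun i _ => sq_nonneg _) ⟨k, Finset.mem_univ k, by positivity⟩
  have hnx_pos : 0 < nx := by rw [hnx]; exact Real.sqrt_pos.mpr hsum_pos
  have hnx_ne : nx ≠ 0 := ne_of_gt hnx_pos
  have hnx_sq : nx ^ 2 = ∑ j : Fin n, (c j)^2 := by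
    rw [hnx, Real.sq_sqrt hsum_pos.le]
  -- polar formula
  have hpolar : ∀ v w : EuclideanSpace ℝ (Fin (n + 2)), QuadraticMap.polar Q v w =
      2*(v 0 * w 0) - ∑ j : Fin (n+1), 2*(v j.succ * w j.succ) := by
    intro v w
    have h1 : ∀ j : Fin (n+1), (v j.succ + w j.succ)^2
        = (v j.succ^2 + w j.succ^2) + 2*(v j.succ * w j.succ) := fun j => by ring
    simp only [QuadraticMap.polar, hQ, PiLp.add_apply]
    rw [Finset.sum_congr rfl (fun j _ => h1 j), Finset.sum_add_distrib, Finset.sum_add_distrib]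
    ring
  -- index facts
  have hone_val : ((1 : Fin (n+2)) : ℕ) = 1 := Fin.val_one _
  have he0v0 : e0 0 = 1 := by rw [he0, hv, if_pos rfl]
  have he0vs : ∀ j : Fin (n+1), e0 j.succ = 0 := by
    intro j
    rw [he0, hv, if_neg]
    simp only [Fin.ext_iff, Fin.val_succ, Fin.val_zero]
    omega
  have he1v0 : e1 0 = 0 := by
    rw [he1, hv, if_neg]
    simp only [Fin.ext_iff, Fin.val_zero, hone_val]
    omega
  have he1vs : ∀ j : Fin (n+1), e1 j.succ = if j = 0 then 1 else 0 := by
    intro j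
    rw [he1, hv]
    congr 1
    simp only [eq_iff_iff, Fin.ext_iff, Fin.val_succ, hone_val, Fin.val_zero]
    omega
  have heLv0 : eL 0 = 0 := by
    rw [heL, hv, if_neg]
    simp only [Fin.ext_iff, Fin.val_zero, Fin.val_last]
    omega
  have heLvs : ∀ j : Fin (n+1), eL j.succ = if j = Fin.last n then 1 else 0 := by
    intro j
    rw [heL, hv]
    congr 1
    have := j.isLt
    simp only [eq_iff_iff, Fin.ext_iff, Fin.val_succ, Fin.val_last]
    omega
  -- quadratic form values
  have hQe0 : Q e0 = 1 := by
    rw [hQ, he0v0, Finset.sum_eq_zero (fun j _ => by rw [he0vs j]; ring)]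
    norm_num
  have hQe1 : Q e1 = -1 := by
    rw [hQ, he1v0]
    have h : ∑ j : Fin (n+1), (e1 j.succ)^2 = ∑ j : Fin (n+1), (if j = (0:Fin (n+1)) then (1:ℝ) else 0) :=
      Finset.sum_congr rfl (fun j _ => by rw [he1vs]; split <;> norm_num)
    rw [h, Finset.sum_ite_eq' Finset.univ (0 : Fin (n+1)) (fun _ => (1:ℝ))]
    simp
  have hQeL : Q eL = -1 := by
    rw [hQ, heLv0]
    have h : ∑ j : Fin (n+1), (eL j.succ)^2
        = ∑ j : Fin (n+1), (if j = Fin.last n then (1:ℝ) else 0) :=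
      Finset.sum_congr rfl (fun j _ => by rw [heLvs]; split <;> norm_num)
    rw [h, Finset.sum_ite_eq' Finset.univ (Fin.last n) (fun _ => (1:ℝ))]
    simp
  have hQx : Q x = -(nx^2) := by
    rw [hQ, hx0', hnx_sq]
    rw [Fin.sum_univ_castSucc (f := fun j : Fin (n+1) => (x j.succ)^2)]
    rw [Fin.succ_last, hxlast]
    simp [hxcs]
  -- polar values (orthogonality)
  have hP0L : QuadraticMap.polar Q e0 eL = 0 := by
    rw [hpolar, heLv0, Finset.sum_eq_zero (fun j _ => by rw [he0vs j]; ring)]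
    ring
  have hP01 : QuadraticMap.polar Q e0 e1 = 0 := by
    rw [hpolar, he1v0, Finset.sum_eq_zero (fun j _ => by rw [he0vs j]; ring)]
    ring
  have hP0x : QuadraticMap.polar Q e0 x = 0 := by
    rw [hpolar, hx0', Finset.sum_eq_zero (fun j _ => by rw [he0vs j]; ring)]
    ring
  have hPL1 : QuadraticMap.polar Q eL e1 = 0 := by
    rw [hpolar, heLv0, Finset.sum_eq_zero (fun j _ => by
      rw [heLvs j, he1vs j]
      rcases eq_or_ne j (Fin.last n) with h | h
      · subst h
        rw [if_pos rfl, if_neg, mul_zero, mul_zero]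
        simp only [Fin.ext_iff, Fin.val_last, Fin.val_zero]
        omega
      · rw [if_neg h, zero_mul, mul_zero])]
    ring
  have hPLx : QuadraticMap.polar Q eL x = 0 := by
    rw [hpolar, heLv0, Finset.sum_eq_zero (fun j _ => by
      rw [heLvs j]
      rcases eq_or_ne j (Fin.last n) with h | h
      · subst h
        rw [Fin.succ_last, hxlast, mul_zero, mul_zero]
      · rw [if_neg h, zero_mul, mul_zero])]
    ring
  -- Clifford anticommutation
  have swap : ∀ v w : EuclideanSpace ℝ (Fin (n + 2)), QuadraticMap.polar Q v w = 0 →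
      CliffordAlgebra.ι Q w * CliffordAlgebra.ι Q v
        = -(CliffordAlgebra.ι Q v * CliffordAlgebra.ι Q w) := by
    intro v w h
    have h2 := CliffordAlgebra.ι_mul_ι_add_swap (Q := Q) v w
    rw [h, map_zero] at h2
    exact eq_neg_of_add_eq_zero_left ((add_comm _ _).trans h2)
  exact gn_key _ _ _ _ nx hnx_ne
    (by rw [CliffordAlgebra.ι_sq_scalar, hQe0, map_one])
    (by rw [CliffordAlgebra.ι_sq_scalar, hQeL, map_neg, map_one])
    (by rw [CliffordAlgebra.ι_sq_scalar, hQe1, map_neg, map_one])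
    (by rw [CliffordAlgebra.ι_sq_scalar, hQx])
    (swap e0 eL hP0L) (swap e0 e1 hP01) (swap eL e1 hPL1)
    (swap e0 x hP0x) (swap eL x hPLx)
end

section
/- Let (S,ρ) be a Clifford module for Cl(ℝⁿ) and (S',ρ') its dual module with pairing (s,t') = t'(s). Let g = ι(v₁)ι(v₂)⋯ι(v_{2k}) ∈ Cl(ℝⁿ) be a product of an even number of unit vectors v_j ∈ ℝⁿ (i.e., g ∈ Spin(n)), and let x₁,…,x_k ∈ ℝⁿ and y₁,…,y_k ∈ ℝⁿ be such that ι(y_i) = g⁻¹ ι(x_i) g for each i. Then for all s ∈ S and t' ∈ S': (ρ(x₁)ρ(x₂)⋯ρ(x_k)ρ(g) s, ρ'(g) t') = (ρ(y₁)ρ(y₂)⋯ρ(y_k) s, t'). (This expresses that the map Ψ(s⊗t')(ω) = (ρ(γ(ω))s, t') intertwines ρ⊗ρ' with the natural representation of Spin(n) on alternating forms.) -/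
private lemma aux_prod_mul_reverse {A : Type*} [Ring A] (l : List A)
    (h : ∀ a ∈ l, a * a = -1) :
    l.prod * l.reverse.prod = (-1 : A) ^ l.length := by
  induction l with
  | nil => simp
  | cons a t ih =>
    have ht := ih (fun b hb => h b (List.mem_cons_of_mem _ hb))
    have ha := h a List.mem_cons_self
    have hc : Commute ((-1 : A) ^ t.length) a :=
      ((Commute.one_left a).neg_left).pow_left _
    rw [List.prod_cons, List.reverse_cons, List.prod_append, List.prod_singleton,
      mul_assoc, ← mul_assoc t.prod, ht, hc.eq, ← mul_assoc, ha]
    simp [pow_succ, mul_comm]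

private lemma aux_reverse_mul_prod {A : Type*} [Ring A] (l : List A)
    (h : ∀ a ∈ l, a * a = -1) :
    l.reverse.prod * l.prod = (-1 : A) ^ l.length := by
  have := aux_prod_mul_reverse l.reverse (fun a ha => h a (List.mem_reverse.mp ha))
  simpa using this

private lemma aux_conj_prod {M : Type*} [Monoid M] (r g : M) (h1 : r * g = 1)
    (h2 : g * r = 1) (l : List M) :
    (l.map (fun a => r * a * g)).prod = r * l.prod * g := by
  induction l with
  | nil => simp [h1]
  | cons a t ih =>
    calc ((a :: t).map (fun a => r * a * g)).prod
        = (r * a * g) * (r * t.prod * g) := by rw [List.map_cons, List.prod_cons, ih]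
      _ = r * a * ((g * r) * (t.prod * g)) := by simp [mul_assoc]
      _ = r * (a :: t).prod * g := by rw [h2]; simp [mul_assoc]

/-- The map Ψ intertwines ρ⊗ρ' with the natural representation of Spin(n):
(ρ(x₁)⋯ρ(x_k)ρ(g)s, ρ'(g)t') = (ρ(y₁)⋯ρ(y_k)s, t') when ι(yᵢ) = g⁻¹ι(xᵢ)g. -/
theorem psi_intertwines (n k : ℕ)
    (Q : QuadraticForm ℝ (EuclideanSpace ℝ (Fin n)))
    (hQ : ∀ x : EuclideanSpace ℝ (Fin n), Q x = -‖x‖ ^ 2)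
    (S : Type) [AddCommGroup S] [Module ℂ S] [FiniteDimensional ℂ S] [Nontrivial S]
    (ρ : CliffordAlgebra Q →ₐ[ℝ] Module.End ℂ S)
    (ρ' : CliffordAlgebra Q →ₐ[ℝ] Module.End ℂ (Module.Dual ℂ S))
    (hρ' : ∀ (x : EuclideanSpace ℝ (Fin n)) (t' : Module.Dual ℂ S) (s : S),
      (ρ' (CliffordAlgebra.ι Q x) t') s = -(t' (ρ (CliffordAlgebra.ι Q x) s)))
    (v : Fin (2 * k) → EuclideanSpace ℝ (Fin n)) (hv : ∀ i, ‖v i‖ = 1)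
    (x y : Fin k → EuclideanSpace ℝ (Fin n))
    (hy : ∀ i, CliffordAlgebra.ι Q (y i) =
      (List.ofFn fun a => CliffordAlgebra.ι Q (v a)).reverse.prod *
        CliffordAlgebra.ι Q (x i) *
        (List.ofFn fun a => CliffordAlgebra.ι Q (v a)).prod)
    (s : S) (t' : Module.Dual ℂ S) :
    (ρ' ((List.ofFn fun a => CliffordAlgebra.ι Q (v a)).prod) t')
        (((List.ofFn fun i => ρ (CliffordAlgebra.ι Q (x i))).prod)
          (ρ ((List.ofFn fun a => CliffordAlgebra.ι Q (v a)).prod) s)) =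
      t' (((List.ofFn fun i => ρ (CliffordAlgebra.ι Q (y i))).prod) s) := by
  classical
  set ι := CliffordAlgebra.ι Q
  -- squares of the unit vectors
  have hsq : ∀ a ∈ (List.ofFn fun a => ι (v a)), a * a = -1 := by
    intro a ha
    rw [List.mem_ofFn] at ha
    obtain ⟨i, rfl⟩ := ha
    rw [CliffordAlgebra.ι_sq_scalar, hQ, hv]
    simp
  set G := (List.ofFn fun a => ι (v a)).prod with hG
  set R := (List.ofFn fun a => ι (v a)).reverse.prod with hR
  have hlen : (List.ofFn fun a => ι (v a)).length = 2 * k := by simp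
  have hGR : G * R = 1 := by
    rw [hG, hR, aux_prod_mul_reverse _ hsq, hlen]
    exact Even.neg_one_pow (even_two_mul k)
  have hRG : R * G = 1 := by
    rw [hG, hR, aux_reverse_mul_prod _ hsq, hlen]
    exact Even.neg_one_pow (even_two_mul k)
  -- the dual action on a product of generators
  have key : ∀ (w : List (EuclideanSpace ℝ (Fin n))) (t' : Module.Dual ℂ S) (s : S),
      (ρ' ((w.map ι).prod) t') s
        = (-1 : ℂ) ^ w.length * t' (ρ ((w.map ι).reverse.prod) s) := by
    intro w
    induction w with
    | nil => intro t' s; simp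
    | cons a t ih =>
      intro t' s
      have : (ρ' (((a :: t).map ι).prod)) t'
          = (ρ' (ι a)) ((ρ' ((t.map ι).prod)) t') := by
        rw [List.map_cons, List.prod_cons, map_mul]; rfl
      rw [this, hρ', ih, List.map_cons, List.reverse_cons, List.prod_append,
        List.prod_cons, List.prod_nil, mul_one, map_mul]
      simp only [Module.End.mul_apply, List.length_cons, pow_succ]
      ring
  -- rewrite the x-product as ρ of a Clifford element
  have hXprod : (List.ofFn fun i => ρ (ι (x i))).prod
      = ρ (((List.ofFn x).map ι).prod) := by
    rw [map_list_prod, List.map_map, List.map_ofFn]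
    rfl
  have hmap : (List.ofFn fun a => ι (v a)) = (List.ofFn v).map ι := by
    rw [List.map_ofFn]; rfl
  -- compute LHS
  have hLHS : (ρ' G t')
      (((List.ofFn fun i => ρ (ι (x i))).prod) (ρ G s))
      = t' (ρ (R * (((List.ofFn x).map ι).prod * G)) s) := by
    rw [hXprod, hG, hmap, key, List.length_ofFn, Even.neg_one_pow (even_two_mul k),
      one_mul, hR, hmap]
    simp only [map_mul, Module.End.mul_apply]
  rw [hLHS]
  -- rewrite the y-product
  have hY : (List.ofFn fun i => ι (y i)) = ((List.ofFn x).map ι).map (fun a => R * a * G) := by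
    rw [List.map_map]
    simp only [List.map_ofFn]
    congr 1
    funext i
    exact hy i
  have hYprod : ((List.ofFn fun i => ι (y i))).prod = R * ((List.ofFn x).map ι).prod * G := by
    rw [hY, aux_conj_prod R G hRG hGR]
  have hρY : (List.ofFn fun i => ρ (ι (y i))).prod
      = ρ ((List.ofFn fun i => ι (y i)).prod) := by
    rw [map_list_prod, List.map_ofFn]
    rfl
  rw [hρY, hYprod]
  congr 2
  rw [mul_assoc]
end

section
/- Let (S,ρ) be a Clifford module for Cl(ℝⁿ) and (S',ρ') its dual module with pairing (s,t') = t'(s). Let 1 ≤ j₁ < ⋯ < j_k ≤ n and e_J = ι(e_{j₁})⋯ι(e_{j_k}) ∈ Cl(ℝⁿ). Then for all v ∈ S and w' ∈ S': ∑_{i=1}^n (ρ(e_J)ρ(e_i)v, ρ'(e_i)w') = (−1)^k (n−2k)·(ρ(e_J)v, w'). (This is the identity Ψ^{(k)} ∘ L = (−1)^k(n−2k) Ψ^{(k)}, where L(v⊗w') = ∑_i ρ(e_i)v ⊗ ρ'(e_i)w'.) -/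
open CliffordAlgebra

private lemma prod_mul_right_aux {A : Type*} [Ring A] [Algebra ℝ A] {n : ℕ}
    (f : Fin n → A) (i : Fin n)
    (hanti : ∀ j, j ≠ i → f j * f i = -(f i * f j)) :
    ∀ l : List (Fin n),
      (l.map f).prod * f i
        = ((-1 : ℝ) ^ (l.countP (· ≠ i))) • (f i * (l.map f).prod) := by
  intro l
  induction l with
  | nil => simp
  | cons j t ih =>
    rw [List.map_cons, List.prod_cons, mul_assoc, ih, List.countP_cons]
    by_cases hji : j = i
    · subst hji
      simp [mul_smul_comm, mul_assoc]
    · have h1 : (decide (j ≠ i)) = true := by simp [hji]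
      rw [h1, if_pos rfl, pow_succ, mul_smul_comm, ← mul_assoc, hanti j hji]
      rw [neg_mul, mul_assoc, smul_neg, ← neg_smul]
      ring_nf

/-- The identity Ψ^{(k)} ∘ L = (−1)^k(n−2k) Ψ^{(k)}:
∑_i (ρ(e_J)ρ(e_i)v, ρ'(e_i)w') = (−1)^k(n−2k)·(ρ(e_J)v, w'). -/
theorem psi_k_L (n k : ℕ)
    (Q : QuadraticForm ℝ (EuclideanSpace ℝ (Fin n)))
    (hQ : ∀ x : EuclideanSpace ℝ (Fin n), Q x = -‖x‖ ^ 2)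
    (S : Type) [AddCommGroup S] [Module ℂ S] [FiniteDimensional ℂ S] [Nontrivial S]
    (ρ : CliffordAlgebra Q →ₐ[ℝ] Module.End ℂ S)
    (ρ' : CliffordAlgebra Q →ₐ[ℝ] Module.End ℂ (Module.Dual ℂ S))
    (hρ' : ∀ (x : EuclideanSpace ℝ (Fin n)) (t' : Module.Dual ℂ S) (s : S),
      (ρ' (CliffordAlgebra.ι Q x) t') s = -(t' (ρ (CliffordAlgebra.ι Q x) s)))
    (J : Fin k → Fin n) (hJ : StrictMono J)
    (v : S) (w' : Module.Dual ℂ S) :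
    ∑ i : Fin n,
        (ρ' (CliffordAlgebra.ι Q (EuclideanSpace.single i (1 : ℝ))) w')
          ((ρ ((List.ofFn fun a =>
              CliffordAlgebra.ι Q (EuclideanSpace.single (J a) (1 : ℝ))).prod))
            ((ρ (CliffordAlgebra.ι Q (EuclideanSpace.single i (1 : ℝ)))) v)) =
      ((-1 : ℂ) ^ k * ((n : ℂ) - 2 * k)) *
        w' ((ρ ((List.ofFn fun a =>
            CliffordAlgebra.ι Q (EuclideanSpace.single (J a) (1 : ℝ))).prod)) v) := by
  classical
  set E : Fin n → EuclideanSpace ℝ (Fin n) := fun i => EuclideanSpace.single i 1 with hE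
  have hnorm : ∀ i, ‖E i‖ = 1 := fun i => by simp [hE, EuclideanSpace.norm_single]
  have hQE : ∀ i, Q (E i) = -1 := fun i => by rw [hQ, hnorm]; norm_num
  have hortho : ∀ i j : Fin n, i ≠ j → Q.IsOrtho (E i) (E j) := by
    intro i j hij
    rw [QuadraticMap.isOrtho_def, hQ, hQ, hQ]
    have hin : inner ℝ (E i) (E j) = (0:ℝ) := by
      simp [hE, EuclideanSpace.inner_single_left, EuclideanSpace.single_apply, Ne.symm hij]
    rw [@norm_add_sq_real, hin, hnorm, hnorm]
    ring
  have hanti : ∀ i j : Fin n, j ≠ i →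
      ι Q (E j) * ι Q (E i) = -(ι Q (E i) * ι Q (E j)) := fun i j hij =>
    ι_mul_ι_comm_of_isOrtho (hortho j i hij)
  set l : List (Fin n) := List.ofFn J with hl
  set f : Fin n → CliffordAlgebra Q := fun j => ι Q (E j) with hf
  set P : CliffordAlgebra Q := (l.map f).prod with hP
  have hPeq : (List.ofFn fun a => ι Q (EuclideanSpace.single (J a) (1 : ℝ))).prod = P := by
    rw [hP, hl, List.map_ofFn]
    rfl
  rw [hPeq]
  have key : ∀ i : Fin n,
      (ρ' (ι Q (E i)) w') ((ρ P) ((ρ (ι Q (E i))) v))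
        = ((-1 : ℂ) ^ (l.countP (· ≠ i))) * w' ((ρ P) v) := by
    intro i
    rw [hρ']
    have hx : ι Q (E i) * (P * ι Q (E i)) = ((-1:ℝ) ^ (l.countP (· ≠ i) + 1)) • P := by
      rw [hP, prod_mul_right_aux f i (fun j hj => hanti i j hj) l, mul_smul_comm,
        ← mul_assoc]
      have hsq : ι Q (E i) * f i = algebraMap ℝ _ (-1) := by
        show ι Q (E i) * ι Q (E i) = _
        rw [ι_sq_scalar, hQE]
      rw [hsq, Algebra.algebraMap_eq_smul_one, smul_mul_assoc, one_mul, smul_smul,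
        pow_succ]
    have hcomp : (ρ (ι Q (E i))) ((ρ P) ((ρ (ι Q (E i))) v))
        = (ρ (ι Q (E i) * (P * ι Q (E i)))) v := by
      simp [map_mul, Module.End.mul_apply]
    rw [hcomp, hx, map_smul, LinearMap.smul_apply, LinearMap.map_smul_of_tower,
      Complex.real_smul]
    push_cast
    rw [pow_succ]
    ring
  rw [Finset.sum_congr rfl (fun i _ => key i), ← Finset.sum_mul]
  congr 1
  -- counting
  have hnod : l.Nodup := List.nodup_ofFn.mpr hJ.injective
  have hlen : l.length = k := by simp [hl]
  have hcount : ∀ i : Fin n,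
      l.countP (· ≠ i) = if i ∈ Finset.image J Finset.univ then k - 1 else k := by
    intro i
    by_cases hi : i ∈ Finset.image J Finset.univ
    · have hmem : i ∈ l := by
        simp only [Finset.mem_image, Finset.mem_univ, true_and] at hi
        rw [hl, List.mem_ofFn]
        exact hi.imp (fun a ha => ha)
      have hperm := List.perm_cons_erase hmem
      rw [if_pos hi, hperm.countP_eq]
      have herase : ∀ a ∈ l.erase i, a ≠ i := by
        intro a ha hai
        subst hai
        exact (List.Nodup.not_mem_erase hnod) ha
      have h0 : (if (fun x => decide (x ≠ i)) i = true then 1 else 0) = 0 := by simp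
      rw [List.countP_cons, h0, add_zero]
      rw [List.countP_eq_length.mpr (fun a ha => by simpa using herase a ha)]
      rw [List.length_erase_of_mem hmem, hlen]
    · have hmem : i ∉ l := by
        intro h
        apply hi
        rw [hl, List.mem_ofFn] at h
        obtain ⟨a, ha⟩ := h
        exact Finset.mem_image.mpr ⟨a, Finset.mem_univ a, ha⟩
      rw [if_neg hi, ← hlen]
      exact List.countP_eq_length.mpr (fun a ha => by
        simp only [decide_eq_true_eq]
        rintro rfl
        exact hmem ha)
  simp_rw [hcount]
  have hsplit : ∀ x : Fin n,
      ((-1:ℂ) ^ (if x ∈ Finset.image J Finset.univ then k - 1 else k)) =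
        if x ∈ Finset.image J Finset.univ then (-1:ℂ) ^ (k-1) else (-1:ℂ) ^ k :=
    fun x => apply_ite _ _ _ _
  simp_rw [hsplit]
  rw [Finset.sum_ite, Finset.sum_const, Finset.sum_const]
  have hcard : (Finset.univ.filter (· ∈ Finset.image J Finset.univ)).card = k := by
    rw [Finset.filter_mem_eq_inter, Finset.univ_inter,
      Finset.card_image_of_injective _ hJ.injective, Finset.card_univ, Fintype.card_fin]
  have hkn : k ≤ n := by
    simpa using Fintype.card_le_of_injective J hJ.injective
  have hcard2 : (Finset.univ.filter (¬ · ∈ Finset.image J Finset.univ)).card = n - k := by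
    rw [Finset.filter_not, Finset.card_sdiff_of_subset (Finset.filter_subset _ _), hcard,
      Finset.card_univ, Fintype.card_fin]
  rw [hcard, hcard2, nsmul_eq_mul, nsmul_eq_mul, Nat.cast_sub hkn]
  rcases k with _ | m
  · simp
  · have : m + 1 - 1 = m := rfl
    rw [this, pow_succ]
    push_cast
    ring
end

section
/- Let (S,ρ) be a Clifford module for Cl(ℝⁿ), let s ∈ ℂ, and define r̸_s : ℝⁿ∖{0} → End_ℂ(S) by r̸_s(x) = ‖x‖^{s−1}·ρ(x), where ‖x‖^{s−1} = exp((s−1)·log‖x‖) ∈ ℂ. Then for every x ≠ 0, the Laplacian acting componentwise satisfies Δ r̸_s(x) = ∑_{j=1}^n ∂²r̸_s/∂x_j²(x) = (s−1)(s+n−1)·r̸_{s−2}(x) = (s−1)(s+n−1)·‖x‖^{s−3}·ρ(x). -/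
open Complex Filter Topology

private lemma sqrt_cpow_eq' (r : ℝ) (hr : 0 < r) (c : ℂ) :
    ((Real.sqrt r : ℝ) : ℂ) ^ c = Complex.exp (c / 2 * Complex.log (r : ℂ)) := by
  have h1 : ((Real.sqrt r : ℝ) : ℂ) ≠ 0 := by
    exact_mod_cast (Real.sqrt_pos.2 hr).ne'
  rw [Complex.cpow_def_of_ne_zero h1, ← Complex.ofReal_log (Real.sqrt_nonneg r),
    Real.log_sqrt hr.le, ← Complex.ofReal_log hr.le]
  push_cast
  ring_nf

set_option maxHeartbeats 1000000 in
private lemma key {E : Type*} [NormedAddCommGroup E] [NormedSpace ℂ E]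
    (s : ℂ) (v w : E) (a b : ℝ) (ha : 0 < a) :
    iteratedDeriv 2
      (fun t : ℝ => (((Real.sqrt (a + 2*b*t + t^2) : ℝ) : ℂ) ^ (s-1)) • (v + t • w)) 0
    = ((s-1) * ((a:ℂ) + (s-3)*(b:ℂ)^2) * Complex.exp ((s-5)/2 * Complex.log (a:ℂ))) • v
      + (2*(s-1)*(b:ℂ) * Complex.exp ((s-3)/2 * Complex.log (a:ℂ))) • w := by
  have ha' : (a:ℂ) ≠ 0 := by exact_mod_cast ha.ne'
  set q : ℝ → ℝ := fun t => a + 2*b*t + t^2 with hqd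
  have hq : ∀ t, HasDerivAt q (2*b + 2*t) t := by
    intro t
    have h := ((hasDerivAt_id t).const_mul (2*b)).const_add a |>.add (hasDerivAt_pow 2 t)
    simpa [hqd, mul_comm, Pi.add_def] using h
  have hq0 : q 0 = a := by simp [hqd]
  have hqc : Continuous q := by
    have : ∀ t, ContinuousAt q t := fun t => (hq t).continuousAt
    exact continuous_iff_continuousAt.2 this
  set U : Set ℝ := {t | 0 < q t} with hUd
  have hUo : IsOpen U := isOpen_lt continuous_const hqc
  have hU0 : (0:ℝ) ∈ U := by simp [hUd, hq0, ha]
  set φ : ℝ → ℂ := fun t => Complex.exp ((s-1)/2 * Complex.log ((q t : ℝ) : ℂ)) with hφd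
  set φd : ℝ → ℂ := fun t => ((s-1)/2 * (((2*b+2*t : ℝ):ℂ) / ((q t : ℝ):ℂ))) * φ t with hφdd
  have hqne : ∀ t ∈ U, ((q t : ℝ):ℂ) ≠ 0 := by
    intro t ht; exact_mod_cast (show (0:ℝ) < q t from ht).ne'
  have hφ : ∀ t ∈ U, HasDerivAt φ (φd t) t := by
    intro t ht
    have h1 : HasDerivAt (fun t => ((q t : ℝ) : ℂ)) ((2*b+2*t : ℝ) : ℂ) t := (hq t).ofReal_comp
    have h2 := (Complex.hasDerivAt_log (Complex.ofReal_mem_slitPlane.2 ht)).scomp t h1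
    have h3 := (h2.const_mul ((s-1)/2)).cexp
    convert h3 using 1
    show (s-1)/2 * (((2*b+2*t : ℝ):ℂ) / ((q t : ℝ):ℂ)) * Complex.exp ((s-1)/2 * Complex.log ((q t : ℝ) : ℂ)) = _
    simp only [Function.comp_apply, smul_eq_mul, div_eq_mul_inv]
    ring
    rfl
  set F : ℝ → E := fun t => φ t • (v + t • w) with hFd
  set G : ℝ → E := fun t => φd t • (v + t • w) + φ t • w with hGd
  have hline : ∀ t : ℝ, HasDerivAt (fun y : ℝ => v + y • w) w t := by
    intro t
    simpa using ((hasDerivAt_id t).smul_const w).const_add v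
  have hF : ∀ t ∈ U, HasDerivAt F (G t) t := by
    intro t ht
    have := (hφ t ht).smul (hline t)
    exact (show HasDerivAt F (φ t • w + φd t • (v + t • w)) t from this).congr_deriv (add_comm _ _)
  have hfF : ∀ t ∈ U, (((Real.sqrt (q t) : ℝ):ℂ) ^ (s-1)) • (v + t • w) = F t := by
    intro t ht
    rw [sqrt_cpow_eq' (q t) ht (s-1)]
  have hmemU : U ∈ 𝓝 (0:ℝ) := hUo.mem_nhds hU0
  have hf : ∀ t ∈ U,
      HasDerivAt (fun t : ℝ => (((Real.sqrt (q t) : ℝ):ℂ) ^ (s-1)) • (v + t • w)) (G t) t := by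
    intro t ht
    exact (hF t ht).congr_of_eventuallyEq
      (eventually_of_mem (hUo.mem_nhds ht) fun y hy => hfF y hy)
  have hder : deriv (fun t : ℝ => (((Real.sqrt (q t) : ℝ):ℂ) ^ (s-1)) • (v + t • w)) =ᶠ[𝓝 (0:ℝ)] G :=
    eventually_of_mem hmemU fun t ht => (hf t ht).deriv
  show iteratedDeriv 2 (fun t : ℝ => (((Real.sqrt (q t) : ℝ):ℂ) ^ (s-1)) • (v + t • w)) 0 = _
  rw [iteratedDeriv_succ, iteratedDeriv_one, hder.deriv_eq]
  -- derivative of G at 0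
  have hnum : HasDerivAt (fun t : ℝ => ((2*b+2*t : ℝ):ℂ)) (2:ℂ) 0 := by
    have h : HasDerivAt (fun t : ℝ => 2*b+2*t) 2 0 := by
      simpa using ((hasDerivAt_id (0:ℝ)).const_mul 2).const_add (2*b)
    simpa using h.ofReal_comp
  have hden : HasDerivAt (fun t : ℝ => ((q t : ℝ):ℂ)) ((2*b : ℝ):ℂ) 0 := by
    simpa using (hq 0).ofReal_comp
  have hratio := hnum.div hden (hqne 0 hU0)
  have hφd0 := (hratio.const_mul ((s-1)/2)).mul (hφ 0 hU0)
  have hG := (hφd0.smul (hline 0)).add ((hφ 0 hU0).smul_const w)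
  rw [(show HasDerivAt G _ 0 from hG).deriv]
  -- now pure algebra
  have hq0c : ((q 0 : ℝ):ℂ) = (a:ℂ) := by rw [hq0]
  set L := Complex.log ((a:ℝ):ℂ) with hLd
  set Ex := Complex.exp ((s-5)/2 * L) with hExd
  have hE1 : Complex.exp ((s-1)/2 * L) = Ex * (a:ℂ)^2 := by
    have h : (s-1)/2 * L = (s-5)/2 * L + (L + L) := by ring
    rw [h, Complex.exp_add, Complex.exp_add, Complex.exp_log ha', hExd]
    ring
  have hE3 : Complex.exp ((s-3)/2 * L) = Ex * (a:ℂ) := by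
    have h : (s-3)/2 * L = (s-5)/2 * L + L := by ring
    rw [h, Complex.exp_add, Complex.exp_log ha', hExd]
  simp only [Pi.div_apply, Pi.mul_apply, hφdd, hφd, hq0c, hq0, zero_smul, smul_zero, add_zero, mul_zero, mul_one,
    Complex.ofReal_zero, Complex.ofReal_mul, Complex.ofReal_ofNat, Complex.ofReal_add, ← hLd, hE1, hE3]
  match_scalars
  · field_simp
    ring
  · field_simp
    ring


/-- Laplacian of the Clifford–Riesz function:
Δ r̸_s(x) = (s−1)(s+n−1)·r̸_{s−2}(x) = (s−1)(s+n−1)·‖x‖^{s−3}·ρ(x). -/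
theorem clifford_riesz_laplacian (n : ℕ)
    (Q : QuadraticForm ℝ (EuclideanSpace ℝ (Fin n)))
    (hQ : ∀ x : EuclideanSpace ℝ (Fin n), Q x = -‖x‖ ^ 2)
    (S : Type) [NormedAddCommGroup S] [NormedSpace ℂ S] [FiniteDimensional ℂ S] [Nontrivial S]
    (ρ : CliffordAlgebra Q →ₐ[ℝ] Module.End ℂ S)
    (s : ℂ)
    (x : EuclideanSpace ℝ (Fin n)) (hx : x ≠ 0) :
    ∑ j : Fin n,
        iteratedDeriv 2
          (fun t : ℝ =>
            ((‖x + t • EuclideanSpace.single j (1 : ℝ)‖ : ℂ) ^ (s - 1)) •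
              LinearMap.toContinuousLinearMap
                (ρ (CliffordAlgebra.ι Q (x + t • EuclideanSpace.single j (1 : ℝ))))) 0 =
      ((s - 1) * (s + (n : ℂ) - 1)) •
        (((‖x‖ : ℂ) ^ (s - 3)) •
          LinearMap.toContinuousLinearMap (ρ (CliffordAlgebra.ι Q x))) := by
  have hxn : (0:ℝ) < ‖x‖ := norm_pos_iff.2 hx
  set a : ℝ := ‖x‖^2 with had
  have ha : 0 < a := by positivity
  have ha' : (a:ℂ) ≠ 0 := by exact_mod_cast ha.ne'
  set v : S →L[ℂ] S := LinearMap.toContinuousLinearMap (ρ (CliffordAlgebra.ι Q x)) with hvd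
  set w : Fin n → (S →L[ℂ] S) := fun j =>
    LinearMap.toContinuousLinearMap (ρ (CliffordAlgebra.ι Q (EuclideanSpace.single j (1:ℝ)))) with hwd
  have hnorm : ∀ (j : Fin n) (t : ℝ),
      ‖x + t • EuclideanSpace.single j (1:ℝ)‖ = Real.sqrt (a + 2*(x j)*t + t^2) := by
    intro j t
    rw [← Real.sqrt_sq (norm_nonneg (x + t • EuclideanSpace.single j (1:ℝ)))]
    congr 1
    rw [norm_add_sq_real]
    simp [norm_smul, EuclideanSpace.norm_single, real_inner_smul_right,
      EuclideanSpace.inner_single_right, mul_pow]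
    ring
  have hsmulA : ∀ (t : ℝ) (M : S →ₗ[ℂ] S),
      LinearMap.toContinuousLinearMap (t • M) = t • LinearMap.toContinuousLinearMap M := by
    intro t M
    ext y
    simp
  have hA : ∀ (j : Fin n) (t : ℝ),
      LinearMap.toContinuousLinearMap
        (ρ (CliffordAlgebra.ι Q (x + t • EuclideanSpace.single j (1:ℝ)))) = v + t • w j := by
    intro j t
    rw [map_add, map_smul, map_add, map_smul, map_add, hsmulA]
  have hfun : ∀ j : Fin n,
      (fun t : ℝ =>
        ((‖x + t • EuclideanSpace.single j (1 : ℝ)‖ : ℂ) ^ (s - 1)) •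
          LinearMap.toContinuousLinearMap
            (ρ (CliffordAlgebra.ι Q (x + t • EuclideanSpace.single j (1 : ℝ)))))
      = fun t : ℝ =>
        (((Real.sqrt (a + 2*(x j)*t + t^2) : ℝ) : ℂ) ^ (s-1)) • (v + t • w j) := by
    intro j
    funext t
    rw [hnorm j t, hA j t]
  set Ex : ℂ := Complex.exp ((s-5)/2 * Complex.log ((a:ℝ):ℂ)) with hExd
  set E3 : ℂ := Complex.exp ((s-3)/2 * Complex.log ((a:ℝ):ℂ)) with hE3d
  have hE3 : E3 = Ex * (a:ℂ) := by
    have h : (s-3)/2 * Complex.log ((a:ℝ):ℂ) = (s-5)/2 * Complex.log ((a:ℝ):ℂ)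
        + Complex.log ((a:ℝ):ℂ) := by ring
    rw [hE3d, h, Complex.exp_add, Complex.exp_log ha', hExd]
  have hsumsq : ∑ j, (x j)^2 = a := by
    rw [had, EuclideanSpace.norm_eq, Real.sq_sqrt (by positivity)]
    simp [sq_abs]
  have hsum2 : ∑ j, ((x j : ℝ):ℂ)^2 = (a:ℂ) := by
    rw [show ((a:ℝ):ℂ) = ((∑ j, (x j)^2 : ℝ) : ℂ) from by rw [hsumsq]]
    push_cast
    rfl
  have hxsum : ∑ j, x j • EuclideanSpace.single j (1:ℝ) = x := by
    ext i
    have h := Finset.sum_apply (ι := Fin n) i Finset.univ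
      (fun j => ((x j • EuclideanSpace.single j (1:ℝ)).ofLp : Fin n → ℝ))
    rw [show ((∑ j, x j • EuclideanSpace.single j (1:ℝ)) i)
        = ∑ j, (x j • EuclideanSpace.single j (1:ℝ)) i from by rw [WithLp.ofLp_sum]; exact h]
    simp [EuclideanSpace.single_apply]
  have hvsum : ∑ j, (x j : ℝ) • w j = v := by
    rw [hvd]
    conv_rhs => rw [← hxsum]
    rw [map_sum, map_sum, map_sum]
    refine Finset.sum_congr rfl fun j _ => ?_
    rw [map_smul, map_smul, hsmulA]
  calc ∑ j : Fin n,
        iteratedDeriv 2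
          (fun t : ℝ =>
            ((‖x + t • EuclideanSpace.single j (1 : ℝ)‖ : ℂ) ^ (s - 1)) •
              LinearMap.toContinuousLinearMap
                (ρ (CliffordAlgebra.ι Q (x + t • EuclideanSpace.single j (1 : ℝ))))) 0
      = ∑ j : Fin n,
          (((s-1) * ((a:ℂ) + (s-3)*((x j : ℝ):ℂ)^2) * Ex) • v
            + (2*(s-1)*((x j : ℝ):ℂ) * E3) • w j) := by
        refine Finset.sum_congr rfl fun j _ => ?_
        rw [hfun j]
        exact key s v (w j) a (x j) ha
    _ = (∑ j : Fin n, (s-1) * ((a:ℂ) + (s-3)*((x j : ℝ):ℂ)^2) * Ex) • v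
          + (2*(s-1)*E3) • ∑ j : Fin n, (x j : ℝ) • w j := by
        rw [Finset.sum_add_distrib, Finset.sum_smul, Finset.smul_sum]
        congr 1
        refine Finset.sum_congr rfl fun j _ => ?_
        rw [show (x j : ℝ) • w j = ((x j : ℝ):ℂ) • w j from by
          rw [← algebraMap_smul ℂ (x j) (w j), Complex.coe_algebraMap],
          smul_smul]
        congr 1
        ring
    _ = ((s-1) * ((n:ℂ)*(a:ℂ) + (s-3)*(a:ℂ)) * Ex) • v + (2*(s-1)*E3) • v := by
        rw [hvsum]
        congr 2
        rw [← Finset.sum_mul, ← Finset.mul_sum]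
        congr 2
        rw [Finset.sum_add_distrib, Finset.sum_const, ← Finset.mul_sum, hsum2]
        simp [Finset.card_univ, nsmul_eq_mul]
    _ = ((s - 1) * (s + (n : ℂ) - 1)) • (((‖x‖ : ℂ) ^ (s - 3)) • v) := by
        have hX : ((‖x‖ : ℝ):ℂ)^(s-3) = E3 := by
          rw [show ‖x‖ = Real.sqrt a from by rw [had, Real.sqrt_sq (norm_nonneg x)],
            sqrt_cpow_eq' a ha (s-3), hE3d]
        rw [hX, smul_smul, ← add_smul]
        congr 1
        rw [hE3]
        ring
end
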